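/- For n ≥ 2 and every integer 1 < k ≤ 2^r: N_r(k) = max{ N_r(j) + (n−1)·N_r(i) : i + j = k, 0 ≤ i ≤ j }. -/

import Mathlib

/-- Whether the `j`-th coordinate of the edge `e` equals the distinguished vertex
(the first vertex of its side, representing `v_{j+1} = 1`). -/
def vcond {n r : ℕ} (e : Fin r → Fin n) (j : ℕ) : Bool :=
  if h : j < r then decide ((e ⟨j, h⟩ : ℕ) = 0) else false

/-- The nested condition `v_{j+1} ∈ e σ₁ (v_{j+2} ∈ e σ₂ (⋯))` determined by a
sequence `σ` over `{∧, ∨}` (where `false` encodes `∧` and `true` encodes `∨`). -/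
def edgeCond {n r : ℕ} (e : Fin r → Fin n) : ℕ → List Bool → Bool
  | j, [] => vcond e j
  | j, false :: s => vcond e j && edgeCond e (j + 1) s
  | j, true :: s => vcond e j || edgeCond e (j + 1) s

/-- `F_r(σ)`: the set of edges of `[n]^r` satisfying the nested condition given by `σ`. -/
def Fset (n r : ℕ) (σ : List Bool) : Finset (Fin r → Fin n) :=
  Finset.univ.filter (fun e => edgeCond e 0 σ = true)

/-- `f_r(σ) = |F_r(σ)|`. -/
def fval (n r : ℕ) (σ : List Bool) : ℕ := (Fset n r σ).card

/-- `Ψ_r`: the sequences over `{∧, ∨}` of length at most `r - 1`. -/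
def PsiSet (r : ℕ) : Finset (List Bool) :=
  (Finset.range r).biUnion (fun m => (Finset.univ : Finset (Fin m → Bool)).image List.ofFn)

/-- The set of values `{f_r(σ) : σ ∈ Σ_r}`, where `f_r(α) = 0` and `f_r(ω) = n ^ r`. -/
def Nvals (n r : ℕ) : Finset ℕ :=
  insert 0 (insert (n ^ r) ((PsiSet r).image (fval n r)))

/-- `N_r(i)`: the `(i+1)`-st smallest element of `{f_r(σ) : σ ∈ Σ_r}`. -/
def Nseq (n r i : ℕ) : ℕ := (Finset.sort (Nvals n r) (· ≤ ·)).getD i 0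


/-- Closed-form for `N_r`. -/
def Mfun (n : ℕ) : ℕ → ℕ → ℕ
  | 0, k => if k = 0 then 0 else 1
  | (r+1), k => if k ≤ 2^r then Mfun n r k else n^r + (n-1) * Mfun n r (k - 2^r)

lemma Mfun_succ (n r k : ℕ) :
    Mfun n (r+1) k = if k ≤ 2^r then Mfun n r k else n^r + (n-1) * Mfun n r (k - 2^r) := rfl

lemma Mfun_zero (n r : ℕ) : Mfun n r 0 = 0 := by
  induction r with
  | zero => simp [Mfun]
  | succ r ih => rw [Mfun_succ]; simp [ih]

lemma Mfun_succ_le (n r k : ℕ) (h : k ≤ 2^r) : Mfun n (r+1) k = Mfun n r k := by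
  rw [Mfun_succ, if_pos h]

lemma Mfun_top (n r : ℕ) (hn : 1 ≤ n) : Mfun n r (2^r) = n^r := by
  induction r with
  | zero => simp [Mfun]
  | succ r ih =>
    have h1 : (1:ℕ) ≤ 2^r := Nat.one_le_two_pow
    obtain ⟨m, rfl⟩ : ∃ m, n = m + 1 := ⟨n - 1, by omega⟩
    rw [Mfun_succ, if_neg (by omega)]
    have h3 : 2^(r+1) - 2^r = 2^r := by omega
    rw [h3, ih]
    have h4 : (m + 1 - 1) = m := by omega
    rw [h4, pow_succ]
    ring

lemma Mfun_succ_add (n r t : ℕ) (hn : 1 ≤ n) :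
    Mfun n (r+1) (2^r + t) = n^r + (n-1) * Mfun n r t := by
  rcases Nat.eq_zero_or_pos t with rfl | ht
  · rw [add_zero, Mfun_succ_le _ _ _ le_rfl, Mfun_top n r hn, Mfun_zero, mul_zero, add_zero]
  · rw [Mfun_succ, if_neg (by omega)]
    have h : 2^r + t - 2^r = t := by omega
    rw [h]

lemma Mfun_one (n r : ℕ) : Mfun n r 1 = 1 := by
  induction r with
  | zero => simp [Mfun]
  | succ r ih => rw [Mfun_succ_le _ _ _ (Nat.one_le_two_pow), ih]

lemma Mfun_mono (n r : ℕ) (hn : 1 ≤ n) {a b : ℕ} (hab : a ≤ b) (hb : b ≤ 2^r) :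
    Mfun n r a ≤ Mfun n r b := by
  induction r generalizing a b with
  | zero =>
    interval_cases b <;> interval_cases a <;> simp [Mfun]
  | succ r ih =>
    by_cases h1 : b ≤ 2^r
    · rw [Mfun_succ_le _ _ _ (le_trans hab h1), Mfun_succ_le _ _ _ h1]
      exact ih hab h1
    · obtain ⟨b', rfl⟩ : ∃ b', b = 2^r + b' := ⟨b - 2^r, by omega⟩
      rw [Mfun_succ_add _ _ _ hn]
      by_cases h2 : a ≤ 2^r
      · rw [Mfun_succ_le _ _ _ h2]
        calc Mfun n r a ≤ n^r := Mfun_top n r hn ▸ ih h2 le_rfl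
        _ ≤ _ := Nat.le_add_right _ _
      · obtain ⟨a', rfl⟩ : ∃ a', a = 2^r + a' := ⟨a - 2^r, by omega⟩
        rw [Mfun_succ_add _ _ _ hn]
        have := ih (a := a') (b := b') (by omega) (by omega)
        have := Nat.mul_le_mul_left (n-1) this
        omega

lemma Mfun_le (n r k : ℕ) (hn : 1 ≤ n) (h : k ≤ 2^r) : Mfun n r k ≤ n^r :=
  Mfun_top n r hn ▸ Mfun_mono n r hn h le_rfl

lemma Mfun_strictMono (n r : ℕ) (hn : 2 ≤ n) {a b : ℕ} (hab : a < b) (hb : b ≤ 2^r) :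
    Mfun n r a < Mfun n r b := by
  have hn1 : 1 ≤ n := by omega
  induction r generalizing a b with
  | zero =>
    have : b = 1 := by omega
    subst this
    have : a = 0 := by omega
    subst this
    simp [Mfun]
  | succ r ih =>
    by_cases h1 : b ≤ 2^r
    · rw [Mfun_succ_le _ _ _ (by omega), Mfun_succ_le _ _ _ h1]
      exact ih hab h1
    · obtain ⟨b', rfl⟩ : ∃ b', b = 2^r + b' := ⟨b - 2^r, by omega⟩
      have hb' : 1 ≤ b' := by omega
      rw [Mfun_succ_add _ _ _ hn1]
      have h4 : 1 ≤ Mfun n r b' := by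
        have := Mfun_one n r ▸ Mfun_mono n r hn1 hb' (by omega)
        omega
      by_cases h2 : a ≤ 2^r
      · rw [Mfun_succ_le _ _ _ h2]
        have h3 : Mfun n r a ≤ n^r := Mfun_le n r a hn1 h2
        have h5 : 1 ≤ (n-1) * Mfun n r b' := Nat.one_le_iff_ne_zero.mpr
          (Nat.mul_ne_zero (by omega) (by omega))
        -- need strict: a < 2^r + b' with a ≤ 2^r; if a = 2^r we need b' term > 0: ok h5
        omega
      · obtain ⟨a', rfl⟩ : ∃ a', a = 2^r + a' := ⟨a - 2^r, by omega⟩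
        rw [Mfun_succ_add _ _ _ hn1]
        have h5 := ih (a := a') (b := b') (by omega) (by omega)
        have : (n-1) * Mfun n r a' < (n-1) * Mfun n r b' :=
          Nat.mul_lt_mul_of_pos_left h5 (by omega)
        omega
-- P/Q/Q' inequalities
lemma Mfun_PQQ (n : ℕ) (hn : 2 ≤ n) (r : ℕ) :
    (∀ a b, a ≤ b → a + b ≤ 2^r → Mfun n r b + (n-1) * Mfun n r a ≤ Mfun n r (a+b)) ∧
    (∀ a b s, a ≤ b → b ≤ 2^r → a + b = 2^r + s →
      Mfun n r b + (n-1) * Mfun n r a ≤ n^r + (n-1) * Mfun n r s) ∧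
    (∀ a b s, a ≤ 2^r → b ≤ 2^r → a + b = 2^r + s →
      Mfun n r a + Mfun n r b ≤ n^r + Mfun n r s) := by
  have hn1 : 1 ≤ n := by omega
  induction r with
  | zero =>
    refine ⟨?_, ?_, ?_⟩
    · intro a b hab hs
      have : (a = 0 ∧ b = 0) ∨ (a = 0 ∧ b = 1) := by omega
      rcases this with ⟨rfl, rfl⟩ | ⟨rfl, rfl⟩ <;> simp [Mfun]
    · intro a b s hab hb hs
      have : (a = 0 ∧ b = 1 ∧ s = 0) ∨ (a = 1 ∧ b = 1 ∧ s = 1) := by omega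
      rcases this with ⟨rfl, rfl, rfl⟩ | ⟨rfl, rfl, rfl⟩ <;> simp [Mfun]
    · intro a b s ha hb hs
      have : (a = 0 ∧ b = 1 ∧ s = 0) ∨ (a = 1 ∧ b = 0 ∧ s = 0) ∨
          (a = 1 ∧ b = 1 ∧ s = 1) := by omega
      rcases this with ⟨rfl, rfl, rfl⟩ | ⟨rfl, rfl, rfl⟩ | ⟨rfl, rfl, rfl⟩ <;>
        simp [Mfun] <;> omega
  | succ r ih =>
    obtain ⟨P, Q, Q'⟩ := ih
    -- unweighted superadditivity at level r
    have P' : ∀ a b, a + b ≤ 2^r → Mfun n r a + Mfun n r b ≤ Mfun n r (a+b) := by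
      intro a b hs
      rcases le_total a b with h | h
      · have := P a b h hs
        have h2 : Mfun n r a ≤ (n-1) * Mfun n r a := Nat.le_mul_of_pos_left _ (by omega)
        omega
      · have := P b a h (by omega)
        have h2 : Mfun n r b ≤ (n-1) * Mfun n r b := Nat.le_mul_of_pos_left _ (by omega)
        rw [add_comm a b]
        omega
    have hP : ∀ a b, a ≤ b → a + b ≤ 2^(r+1) →
        Mfun n (r+1) b + (n-1) * Mfun n (r+1) a ≤ Mfun n (r+1) (a+b) := by
      intro a b hab hs
      have h2 : (2:ℕ)^(r+1) = 2^r + 2^r := by have : (1:ℕ) ≤ 2^r := Nat.one_le_two_pow; omega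
      by_cases hb : b ≤ 2^r
      · have ha : a ≤ 2^r := le_trans hab hb
        by_cases hk : a + b ≤ 2^r
        · rw [Mfun_succ_le _ _ _ ha, Mfun_succ_le _ _ _ hb, Mfun_succ_le _ _ _ hk]
          exact P a b hab hk
        · obtain ⟨s, hsk⟩ : ∃ s, a + b = 2^r + s := ⟨a + b - 2^r, by omega⟩
          rw [Mfun_succ_le _ _ _ ha, Mfun_succ_le _ _ _ hb, hsk, Mfun_succ_add _ _ _ hn1]
          exact Q a b s hab hb hsk
      · obtain ⟨b', rfl⟩ : ∃ b', b = 2^r + b' := ⟨b - 2^r, by omega⟩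
        have ha : a ≤ 2^r := by omega
        have hab' : a + b' ≤ 2^r := by omega
        have hre : a + (2^r + b') = 2^r + (a + b') := by omega
        rw [Mfun_succ_add _ _ _ hn1, Mfun_succ_le _ _ _ ha, hre, Mfun_succ_add _ _ _ hn1]
        have h3 := P' a b' hab'
        have h4 := Nat.mul_le_mul_left (n-1) h3
        have h5 : (n-1) * (Mfun n r a + Mfun n r b') =
            (n-1) * Mfun n r a + (n-1) * Mfun n r b' := by ring
        omega
    refine ⟨hP, ?_, ?_⟩
    · -- Q at r+1
      intro a b s hab hb hs
      have h2 : (2:ℕ)^(r+1) = 2^r + 2^r := by have : (1:ℕ) ≤ 2^r := Nat.one_le_two_pow; omega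
      by_cases ha : a ≤ 2^r
      · -- b ≥ 2^r
        have hbge : 2^r ≤ b := by omega
        obtain ⟨b', rfl⟩ : ∃ b', b = 2^r + b' := ⟨b - 2^r, by omega⟩
        have hb' : b' ≤ 2^r := by omega
        have hsle : s ≤ 2^r := by omega
        have hs' : a + b' = 2^r + s := by omega
        rw [Mfun_succ_add _ _ _ hn1, Mfun_succ_le _ _ _ ha, Mfun_succ_le _ _ _ hsle]
        have h3 := Q' a b' s ha hb' hs'
        have h4 := Nat.mul_le_mul_left (n-1) h3
        have h5 : (n-1) * (Mfun n r a + Mfun n r b') =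
            (n-1) * Mfun n r a + (n-1) * Mfun n r b' := by ring
        have h6 : (n-1) * (n^r + Mfun n r s) = (n-1) * n^r + (n-1) * Mfun n r s := by ring
        have h7 : n^(r+1) = n * n^r := by rw [pow_succ]; ring
        have h8 : n * n^r = n^r + (n-1) * n^r := by
          obtain ⟨m, rfl⟩ : ∃ m, n = m + 1 := ⟨n-1, by omega⟩
          simp; ring
        omega
      · obtain ⟨a', rfl⟩ : ∃ a', a = 2^r + a' := ⟨a - 2^r, by omega⟩
        obtain ⟨b', rfl⟩ : ∃ b', b = 2^r + b' := ⟨b - 2^r, by omega⟩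
        have ha' : a' ≤ 2^r := by omega
        have hb' : b' ≤ 2^r := by omega
        have hseq : s = a' + b' := by omega
        subst hseq
        rw [Mfun_succ_add _ _ _ hn1, Mfun_succ_add _ _ _ hn1]
        have h3 := hP a' b' (by omega) (by omega)
        rw [Mfun_succ_le _ _ _ ha', Mfun_succ_le _ _ _ hb'] at h3
        have h4 := Nat.mul_le_mul_left (n-1) h3
        have h5 : (n-1) * (Mfun n r b' + (n-1) * Mfun n r a') =
            (n-1) * Mfun n r b' + (n-1) * ((n-1) * Mfun n r a') := by ring
        have h6 : (n-1) * (n^r + (n-1) * Mfun n r a') =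
            (n-1) * n^r + (n-1) * ((n-1) * Mfun n r a') := by ring
        have h7 : n^(r+1) = n^r + (n-1) * n^r := by
          obtain ⟨m, rfl⟩ : ∃ m, n = m + 1 := ⟨n-1, by omega⟩
          rw [pow_succ]; simp; ring
        omega
    · -- Q' at r+1
      intro a b s ha hb hs
      have h2 : (2:ℕ)^(r+1) = 2^r + 2^r := by have : (1:ℕ) ≤ 2^r := Nat.one_le_two_pow; omega
      have h7 : n^(r+1) = n^r + (n-1) * n^r := by
        obtain ⟨m, rfl⟩ : ∃ m, n = m + 1 := ⟨n-1, by omega⟩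
        rw [pow_succ]; simp; ring
      -- wlog a ≤ b via a helper handling the asymmetric case
      have key : ∀ a b s, a ≤ 2^(r+1) → b ≤ 2^(r+1) → a + b = 2^(r+1) + s → a < 2^r →
          Mfun n (r+1) a + Mfun n (r+1) b ≤ n^(r+1) + Mfun n (r+1) s := by
        intro a b s ha hb hs halt
        obtain ⟨b', rfl⟩ : ∃ b', b = 2^r + b' := ⟨b - 2^r, by omega⟩
        have hb' : b' ≤ 2^r := by omega
        have hslt : s < 2^r := by omega
        have hs' : a + b' = 2^r + s := by omega
        rw [Mfun_succ_add _ _ _ hn1, Mfun_succ_le _ _ _ (by omega : a ≤ 2^r),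
          Mfun_succ_le _ _ _ (by omega : s ≤ 2^r)]
        have h3 := Q' a b' s (by omega) hb' hs'
        have h4 : Mfun n r b' ≤ n^r := Mfun_le n r b' hn1 hb'
        have e1 : (n-1) * Mfun n r b' = Mfun n r b' + (n-2) * Mfun n r b' := by
          obtain ⟨m, rfl⟩ : ∃ m, n = m + 2 := ⟨n-2, by omega⟩
          simp; ring
        have e2 : (n-2) * Mfun n r b' ≤ (n-2) * n^r := Nat.mul_le_mul_left _ h4
        have e3 : (n-1) * n^r = n^r + (n-2) * n^r := by
          obtain ⟨m, rfl⟩ : ∃ m, n = m + 2 := ⟨n-2, by omega⟩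
          simp; ring
        omega
      by_cases haL : a < 2^r
      · exact key a b s ha hb hs haL
      by_cases hbL : b < 2^r
      · rw [add_comm (Mfun n (r+1) a)]
        exact key b a s hb ha (by omega) hbL
      · obtain ⟨a', rfl⟩ : ∃ a', a = 2^r + a' := ⟨a - 2^r, by omega⟩
        obtain ⟨b', rfl⟩ : ∃ b', b = 2^r + b' := ⟨b - 2^r, by omega⟩
        have ha' : a' ≤ 2^r := by omega
        have hb' : b' ≤ 2^r := by omega
        have hseq : s = a' + b' := by omega
        subst hseq
        rw [Mfun_succ_add _ _ _ hn1, Mfun_succ_add _ _ _ hn1]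
        by_cases hss : a' + b' ≤ 2^r
        · rw [Mfun_succ_le _ _ _ hss]
          have h3 := P' a' b' hss
          have h4 : Mfun n r (a'+b') ≤ n^r := Mfun_le n r _ hn1 hss
          -- (n-1)(Ma'+Mb') = (Ma'+Mb') + (n-2)(Ma'+Mb') ≤ M(s) + (n-2)n^r
          have h5 : (n-1) * (Mfun n r a' + Mfun n r b') ≤
              Mfun n r (a'+b') + (n-2) * n^r := by
            have e1 : (n-1) * (Mfun n r a' + Mfun n r b') =
                (Mfun n r a' + Mfun n r b') + (n-2) * (Mfun n r a' + Mfun n r b') := by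
              obtain ⟨m, rfl⟩ : ∃ m, n = m + 2 := ⟨n-2, by omega⟩
              simp; ring
            have e2 : (n-2) * (Mfun n r a' + Mfun n r b') ≤ (n-2) * n^r :=
              Nat.mul_le_mul_left _ (le_trans h3 h4)
            omega
          have h6 : (n-1) * Mfun n r a' + (n-1) * Mfun n r b' =
              (n-1) * (Mfun n r a' + Mfun n r b') := by ring
          have h8 : (n-2) * n^r + n^r = (n-1) * n^r := by
            obtain ⟨m, rfl⟩ : ∃ m, n = m + 2 := ⟨n-2, by omega⟩
            simp; ring
          omega
        · obtain ⟨s', hs'⟩ : ∃ s', a' + b' = 2^r + s' := ⟨a' + b' - 2^r, by omega⟩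
          rw [hs', Mfun_succ_add _ _ _ hn1]
          have h3 := Q' a' b' s' ha' hb' hs'
          have h4 := Nat.mul_le_mul_left (n-1) h3
          have h5 : (n-1) * (Mfun n r a' + Mfun n r b') =
              (n-1) * Mfun n r a' + (n-1) * Mfun n r b' := by ring
          have h6 : (n-1) * (n^r + Mfun n r s') = (n-1) * n^r + (n-1) * Mfun n r s' := by ring
          omega
lemma Mfun_witness (n : ℕ) (hn : 2 ≤ n) (r k : ℕ) (hk : 2 ≤ k) (hk2 : k ≤ 2^r) :
    ∃ i j, i ≤ j ∧ i + j = k ∧ Mfun n r k = Mfun n r j + (n-1) * Mfun n r i := by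
  have hn1 : 1 ≤ n := by omega
  induction r with
  | zero => omega
  | succ r ih =>
    by_cases h : k ≤ 2^r
    · obtain ⟨i, j, hij, hsum, heq⟩ := ih h
      exact ⟨i, j, hij, hsum, by
        rw [Mfun_succ_le _ _ _ h, Mfun_succ_le _ _ _ (by omega), Mfun_succ_le _ _ _ (by omega),
          heq]⟩
    · refine ⟨k - 2^r, 2^r, by omega, by omega, ?_⟩
      obtain ⟨i, rfl⟩ : ∃ i, k = 2^r + i := ⟨k - 2^r, by omega⟩
      have h1 : 2^r + i - 2^r = i := by omega
      rw [Mfun_succ_add _ _ _ hn1, Mfun_succ_le _ _ _ le_rfl, Mfun_top _ _ hn1, h1,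
        Mfun_succ_le _ _ _ (by omega)]

/-! ### Counting lemmas -/

lemma fin_val_zero {ν : ℕ} (x : Fin (ν+1)) : (x:ℕ) = 0 ↔ x = 0 := by
  constructor
  · intro h; exact Fin.ext h
  · intro h; subst h; rfl

lemma vcond_zero {n m : ℕ} (e : Fin (m+1) → Fin n) :
    vcond e 0 = decide ((e 0 : ℕ) = 0) := by
  simp only [vcond, dif_pos (Nat.succ_pos m)]
  rfl

lemma vcond_tail {n m : ℕ} (e : Fin (m+1) → Fin n) (j : ℕ) :
    vcond e (j+1) = vcond (Fin.tail e) j := by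
  by_cases h : j < m
  · rw [vcond, dif_pos (by omega), vcond, dif_pos h]
    rfl
  · rw [vcond, dif_neg (by omega), vcond, dif_neg h]

lemma edgeCond_tail {n m : ℕ} (e : Fin (m+1) → Fin n) (s : List Bool) :
    ∀ j, edgeCond e (j+1) s = edgeCond (Fin.tail e) j s := by
  induction s with
  | nil => intro j; simp [edgeCond, vcond_tail]
  | cons b s ihs =>
    intro j
    cases b <;> simp [edgeCond, vcond_tail, ihs]

lemma card_filter_cons {n m : ℕ} (D : Fin n → (Fin m → Fin n) → Bool) :
    (Finset.univ.filter (fun e : Fin (m+1) → Fin n => D (e 0) (Fin.tail e) = true)).card =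
    (Finset.univ.filter (fun q : Fin n × (Fin m → Fin n) => D q.1 q.2 = true)).card := by
  apply Finset.card_nbij' (i := fun e => (e 0, Fin.tail e)) (j := fun q => Fin.cons q.1 q.2)
  · intro e he
    simp only [Finset.mem_coe, Finset.mem_filter, Finset.mem_univ, true_and] at he ⊢
    exact he
  · intro q hq
    simp only [Finset.mem_coe, Finset.mem_filter, Finset.mem_univ, true_and] at hq ⊢
    rw [Fin.cons_zero, Fin.tail_cons]
    exact hq
  · intro e he
    exact Fin.cons_self_tail e
  · intro q hq
    simp [Fin.cons_zero, Fin.tail_cons]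

lemma card_fst {n m : ℕ} (hn : 1 ≤ n) :
    (Finset.univ.filter (fun q : Fin n × (Fin m → Fin n) => (q.1 : ℕ) = 0)).card = n^m := by
  obtain ⟨ν, rfl⟩ : ∃ ν, n = ν + 1 := ⟨n - 1, by omega⟩
  have : (Finset.univ.filter (fun q : Fin (ν+1) × (Fin m → Fin (ν+1)) => (q.1 : ℕ) = 0)) =
      ({(0 : Fin (ν+1))} ×ˢ Finset.univ) := by
    ext ⟨x, f⟩
    simp [Finset.mem_product, fin_val_zero, eq_comm]
  rw [this, Finset.card_product]
  simp [Fintype.card_fun]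

lemma card_and {n m : ℕ} (hn : 1 ≤ n) (Q : (Fin m → Fin n) → Bool) :
    (Finset.univ.filter
      (fun q : Fin n × (Fin m → Fin n) => (q.1 : ℕ) = 0 ∧ Q q.2 = true)).card =
    (Finset.univ.filter (fun f : Fin m → Fin n => Q f = true)).card := by
  obtain ⟨ν, rfl⟩ : ∃ ν, n = ν + 1 := ⟨n - 1, by omega⟩
  have : (Finset.univ.filter
      (fun q : Fin (ν+1) × (Fin m → Fin (ν+1)) => (q.1 : ℕ) = 0 ∧ Q q.2 = true)) =
      ({(0 : Fin (ν+1))} ×ˢ (Finset.univ.filter (fun f => Q f = true))) := by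
    ext ⟨x, f⟩
    simp only [Finset.mem_filter, Finset.mem_univ, true_and, Finset.mem_product,
      Finset.mem_singleton, fin_val_zero]
  rw [this, Finset.card_product]
  simp

lemma card_or {n m : ℕ} (hn : 1 ≤ n) (Q : (Fin m → Fin n) → Bool) :
    (Finset.univ.filter
      (fun q : Fin n × (Fin m → Fin n) => (q.1 : ℕ) = 0 ∨ Q q.2 = true)).card =
    n^m + (n-1) * (Finset.univ.filter (fun f : Fin m → Fin n => Q f = true)).card := by
  obtain ⟨ν, rfl⟩ : ∃ ν, n = ν + 1 := ⟨n - 1, by omega⟩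
  simp only [Nat.add_sub_cancel]
  set A := Finset.univ.filter (fun q : Fin (ν+1) × (Fin m → Fin (ν+1)) => (q.1 : ℕ) = 0)
    with hA
  set B := Finset.univ.filter (fun q : Fin (ν+1) × (Fin m → Fin (ν+1)) => Q q.2 = true)
    with hB
  have hunion : (Finset.univ.filter
      (fun q : Fin (ν+1) × (Fin m → Fin (ν+1)) => (q.1 : ℕ) = 0 ∨ Q q.2 = true)) = A ∪ B := by
    rw [hA, hB, ← Finset.filter_or]
  have hinter : (Finset.univ.filter
      (fun q : Fin (ν+1) × (Fin m → Fin (ν+1)) => (q.1 : ℕ) = 0 ∧ Q q.2 = true)) = A ∩ B := by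
    rw [hA, hB, ← Finset.filter_and]
  have hcard := Finset.card_union_add_card_inter A B
  have hAcard : A.card = (ν+1)^m := card_fst hn
  have hBcard : B.card =
      (ν+1) * (Finset.univ.filter (fun f : Fin m → Fin (ν+1) => Q f = true)).card := by
    have : B = (Finset.univ ×ˢ (Finset.univ.filter (fun f => Q f = true))) := by
      ext ⟨x, f⟩; simp [hB, Finset.mem_product]
    rw [this, Finset.card_product, Finset.card_univ, Fintype.card_fin]
  have hIcard := card_and hn Q
  rw [hinter] at hIcard
  rw [hunion]
  have h3 : (ν+1) * (Finset.univ.filter (fun f : Fin m → Fin (ν+1) => Q f = true)).card =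
      ν * (Finset.univ.filter (fun f : Fin m → Fin (ν+1) => Q f = true)).card +
      (Finset.univ.filter (fun f : Fin m → Fin (ν+1) => Q f = true)).card := by ring
  omega

lemma fval_nil {n m : ℕ} (hn : 1 ≤ n) : fval n (m+1) [] = n^m := by
  rw [fval, Fset]
  have he : ∀ e : Fin (m+1) → Fin n, (edgeCond e 0 [] = true) = ((e 0 : ℕ) = 0) := by
    intro e
    simp [edgeCond, vcond_zero]
  simp only [he]
  have := card_filter_cons (n := n) (m := m) (D := fun x _ => decide ((x:ℕ) = 0))
  simp only [decide_eq_true_eq] at this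
  rw [this, card_fst hn]

lemma fval_cons_false {n m : ℕ} (hn : 1 ≤ n) (s : List Bool) :
    fval n (m+1) (false :: s) = fval n m s := by
  rw [fval, Fset]
  have he : ∀ e : Fin (m+1) → Fin n, (edgeCond e 0 (false :: s) = true) =
      ((e 0 : ℕ) = 0 ∧ edgeCond (Fin.tail e) 0 s = true) := by
    intro e
    simp [edgeCond, vcond_zero, edgeCond_tail]
  simp only [he]
  have := card_filter_cons (n := n) (m := m)
    (D := fun x f => decide ((x:ℕ) = 0) && edgeCond f 0 s)
  simp only [Bool.and_eq_true, decide_eq_true_eq] at this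
  rw [this]
  exact (card_and hn (fun f => edgeCond f 0 s)).trans rfl

lemma fval_cons_true {n m : ℕ} (hn : 1 ≤ n) (s : List Bool) :
    fval n (m+1) (true :: s) = n^m + (n-1) * fval n m s := by
  rw [fval, Fset]
  have he : ∀ e : Fin (m+1) → Fin n, (edgeCond e 0 (true :: s) = true) =
      ((e 0 : ℕ) = 0 ∨ edgeCond (Fin.tail e) 0 s = true) := by
    intro e
    simp [edgeCond, vcond_zero, edgeCond_tail]
  simp only [he]
  have := card_filter_cons (n := n) (m := m)
    (D := fun x f => decide ((x:ℕ) = 0) || edgeCond f 0 s)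
  simp only [Bool.or_eq_true, decide_eq_true_eq] at this
  rw [this]
  exact (card_or hn (fun f => edgeCond f 0 s)).trans rfl
/-! ### Structure of Nvals -/

lemma mem_PsiSet {r : ℕ} {σ : List Bool} : σ ∈ PsiSet r ↔ σ.length < r := by
  simp only [PsiSet, Finset.mem_biUnion, Finset.mem_range, Finset.mem_image, Finset.mem_univ,
    true_and]
  constructor
  · rintro ⟨m, hm, f, rfl⟩
    simpa using hm
  · intro h
    exact ⟨σ.length, h, σ.get, List.ofFn_get σ⟩

lemma pow_succ_split {n r : ℕ} (hn : 1 ≤ n) : n^(r+1) = n^r + (n-1) * n^r := by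
  obtain ⟨m, rfl⟩ : ∃ m, n = m + 1 := ⟨n-1, by omega⟩
  rw [pow_succ]; simp; ring

lemma mem_Nvals {n r x : ℕ} :
    x ∈ Nvals n r ↔ x = 0 ∨ x = n^r ∨ ∃ σ ∈ PsiSet r, fval n r σ = x := by
  simp only [Nvals, Finset.mem_insert, Finset.mem_image]

lemma Nvals_succ {n r : ℕ} (hn : 1 ≤ n) :
    Nvals n (r+1) = Nvals n r ∪ (Nvals n r).image (fun v => n^r + (n-1) * v) := by
  ext x
  rw [Finset.mem_union, Finset.mem_image]
  constructor
  · intro hx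
    rcases mem_Nvals.mp hx with rfl | rfl | ⟨σ, hσ, rfl⟩
    · exact Or.inl (mem_Nvals.mpr (Or.inl rfl))
    · exact Or.inr ⟨n^r, mem_Nvals.mpr (Or.inr (Or.inl rfl)), (pow_succ_split hn).symm⟩
    · rw [mem_PsiSet] at hσ
      match σ with
      | [] =>
        exact Or.inl (mem_Nvals.mpr (Or.inr (Or.inl (fval_nil hn))))
      | false :: s =>
        refine Or.inl (mem_Nvals.mpr (Or.inr (Or.inr ⟨s, mem_PsiSet.mpr ?_, ?_⟩)))
        · simpa using hσ
        · exact (fval_cons_false hn s).symm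
      | true :: s =>
        refine Or.inr ⟨fval n r s, mem_Nvals.mpr (Or.inr (Or.inr ⟨s, mem_PsiSet.mpr ?_, rfl⟩)),
          ?_⟩
        · simpa using hσ
        · exact (fval_cons_true hn s).symm
  · rintro (hx | ⟨v, hv, rfl⟩)
    · rcases mem_Nvals.mp hx with rfl | rfl | ⟨σ, hσ, rfl⟩
      · exact mem_Nvals.mpr (Or.inl rfl)
      · exact mem_Nvals.mpr (Or.inr (Or.inr ⟨[], mem_PsiSet.mpr (by simp), fval_nil hn⟩))
      · exact mem_Nvals.mpr (Or.inr (Or.inr ⟨false :: σ, mem_PsiSet.mpr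
          (by simpa using mem_PsiSet.mp hσ), fval_cons_false hn σ⟩))
    · rcases mem_Nvals.mp hv with rfl | rfl | ⟨σ, hσ, rfl⟩
      · refine mem_Nvals.mpr (Or.inr (Or.inr ⟨[], mem_PsiSet.mpr (by simp), ?_⟩))
        rw [fval_nil hn]
        simp
      · exact mem_Nvals.mpr (Or.inr (Or.inl (pow_succ_split hn).symm))
      · exact mem_Nvals.mpr (Or.inr (Or.inr ⟨true :: σ, mem_PsiSet.mpr
          (by simpa using mem_PsiSet.mp hσ), fval_cons_true hn σ⟩))

lemma Nvals_eq_image {n : ℕ} (hn : 1 ≤ n) (r : ℕ) :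
    Nvals n r = (Finset.range (2^r+1)).image (Mfun n r) := by
  induction r with
  | zero =>
    ext x
    simp [Nvals, PsiSet, Finset.mem_range, Finset.mem_image, Mfun]
    constructor
    · rintro (rfl | rfl)
      · exact ⟨0, by omega, rfl⟩
      · exact ⟨1, by omega, rfl⟩
    · rintro ⟨i, hi, rfl⟩
      interval_cases i <;> simp
  | succ r ih =>
    rw [Nvals_succ hn, ih]
    ext x
    simp only [Finset.mem_union, Finset.mem_image, Finset.mem_range]
    constructor
    · rintro (⟨i, hi, rfl⟩ | ⟨v, ⟨i, hi, rfl⟩, rfl⟩)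
      · exact ⟨i, by have : (1:ℕ) ≤ 2^r := Nat.one_le_two_pow; omega,
          (Mfun_succ_le n r i (by omega))⟩
      · refine ⟨2^r + i, by have : (1:ℕ) ≤ 2^r := Nat.one_le_two_pow; omega, ?_⟩
        rw [Mfun_succ_add n r i hn]
    · rintro ⟨i, hi, rfl⟩
      by_cases h : i ≤ 2^r
      · exact Or.inl ⟨i, by omega, (Mfun_succ_le n r i h).symm⟩
      · obtain ⟨t, rfl⟩ : ∃ t, i = 2^r + t := ⟨i - 2^r, by omega⟩
        refine Or.inr ⟨Mfun n r t, ⟨t, by have : (1:ℕ) ≤ 2^r := Nat.one_le_two_pow; omega, rfl⟩,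
          (Mfun_succ_add n r t hn).symm⟩

lemma sort_Nvals {n : ℕ} (hn : 2 ≤ n) (r : ℕ) :
    Finset.sort (Nvals n r) (· ≤ ·) = (List.range (2^r+1)).map (Mfun n r) := by
  have hn1 : 1 ≤ n := by omega
  set L := (List.range (2^r+1)).map (Mfun n r) with hL
  have hnodup : L.Nodup := by
    refine List.Nodup.map_on ?_ List.nodup_range
    intro x hx y hy hxy
    rw [List.mem_range] at hx hy
    by_contra hne
    rcases Nat.lt_or_ge x y with h | h
    · exact absurd hxy (Nat.ne_of_lt (Mfun_strictMono n r hn h (by omega)))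
    · have : y < x := by omega
      exact absurd hxy.symm (Nat.ne_of_lt (Mfun_strictMono n r hn this (by omega)))
  have hsorted : L.Pairwise (· ≤ ·) := by
    rw [hL, List.pairwise_map]
    have h1 : (List.range (2^r+1)).Pairwise (· < ·) := List.pairwise_lt_range
    refine h1.imp_of_mem ?_
    intro a b ha hb hab
    rw [List.mem_range] at ha hb
    exact le_of_lt (Mfun_strictMono n r hn hab (by omega))
  have hfin : L.toFinset = Nvals n r := by
    rw [Nvals_eq_image hn1 r]
    ext x
    simp [List.mem_toFinset, List.mem_map, List.mem_range, Finset.mem_image, Finset.mem_range, hL]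
  rw [← hfin]
  exact (List.toFinset_sort _ hnodup).mpr hsorted

lemma Nseq_eq_Mfun {n : ℕ} (hn : 2 ≤ n) {r i : ℕ} (hi : i ≤ 2^r) :
    Nseq n r i = Mfun n r i := by
  rw [Nseq, sort_Nvals hn r]
  have hlen : i < ((List.range (2^r+1)).map (Mfun n r)).length := by
    simp [List.length_map, List.length_range]; omega
  rw [List.getD_eq_getElem _ _ hlen]
  simp
theorem stmt8 (n r k : ℕ) (hn : 2 ≤ n) (hk1 : 1 < k) (hk2 : k ≤ 2 ^ r) :
    IsGreatest {m : ℕ | ∃ i j : ℕ, i ≤ j ∧ i + j = k ∧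
      m = Nseq n r j + (n - 1) * Nseq n r i} (Nseq n r k) := by
  have hr1 : (1:ℕ) ≤ 2^r := Nat.one_le_two_pow
  constructor
  · obtain ⟨i, j, hij, hsum, heq⟩ := Mfun_witness n hn r k (by omega) hk2
    refine ⟨i, j, hij, hsum, ?_⟩
    rw [Nseq_eq_Mfun hn (by omega : i ≤ 2^r), Nseq_eq_Mfun hn (by omega : j ≤ 2^r),
      Nseq_eq_Mfun hn hk2, heq]
  · rintro m ⟨i, j, hij, hsum, rfl⟩
    rw [Nseq_eq_Mfun hn (by omega : i ≤ 2^r), Nseq_eq_Mfun hn (by omega : j ≤ 2^r),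
      Nseq_eq_Mfun hn hk2]
    have := (Mfun_PQQ n hn r).1 i j hij (by omega)
    rwa [hsum] at this
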